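/- For every legal pair (r,t), g((r+1)/((r−1)(t+1))) ≥ g(3/(t+1)); equivalently, ((t − 2/(r−1))/(t − 2))^{t−1} ≤ r − 1. -/

import Mathlib

/-- A pair `(r,t)` is legal. -/
def Legal (r t : ℕ) : Prop :=
  (9 ≤ r ∧ 3 ≤ t) ∨ (r = 8 ∧ 4 ≤ t) ∨ (r = 7 ∧ 5 ≤ t) ∨ (r = 6 ∧ 37 ≤ t)

/-- `g` is the derivative of `ρ ↦ ρ(1-ρ)^t`. -/
noncomputable def gfun (t : ℕ) (ρ : ℝ) : ℝ := (1 - ρ) ^ (t - 1) * (1 - ((t : ℝ) + 1) * ρ)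


/-- Second-order Bernoulli inequality. -/
lemma bern2 (y : ℝ) (hy : 0 ≤ y) (m : ℕ) :
    1 + m * y + ((m * (m - 1) : ℕ) : ℝ) / 2 * y ^ 2 ≤ (1 + y) ^ m := by
  induction m with
  | zero => norm_num
  | succ m ih =>
      have h1 : (0:ℝ) ≤ 1 + y := by linarith
      have h2 : (1 + (m:ℝ) * y + ((m * (m - 1) : ℕ) : ℝ) / 2 * y ^ 2) * (1 + y)
          ≤ (1 + y) ^ (m + 1) := by
        rw [pow_succ]
        exact mul_le_mul_of_nonneg_right ih h1
      have h3 : (0:ℝ) ≤ ((m * (m - 1) : ℕ) : ℝ) * y ^ 3 := by positivity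
      have hc : ((m * (m-1) : ℕ) : ℝ) = (m:ℝ)^2 - m := by
        cases m with
        | zero => norm_num
        | succ k => push_cast [Nat.succ_sub_one]; ring
      have hc2 : (((m+1) * ((m+1) - 1) : ℕ) : ℝ) = ((m:ℝ)+1)^2 - ((m:ℝ)+1) := by
        push_cast [Nat.succ_sub_one]; ring
      rw [hc] at h2 h3
      rw [hc2]
      push_cast
      nlinarith [h2, h3, mul_nonneg hy (mul_nonneg hy hy)]

/-- The sequence `(1 + c/n)^(n+1)` is decreasing for `0 ≤ c ≤ 2`. -/
lemma step_dec (c : ℝ) (hc0 : 0 ≤ c) (hc2 : c ≤ 2) (n : ℕ) (hn : 1 ≤ n) :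
    (1 + c / (n + 1)) ^ (n + 1 + 1) ≤ (1 + c / n) ^ (n + 1) := by
  have hn1 : (1:ℝ) ≤ (n:ℝ) := by exact_mod_cast hn
  have hnpos : (0:ℝ) < n := by linarith
  have hd : (0:ℝ) < n * ((n:ℝ) + 1 + c) := by positivity
  set y : ℝ := c / ((n:ℝ) * ((n:ℝ) + 1 + c)) with hy_def
  have hy : 0 ≤ y := by positivity
  have hB : (0:ℝ) < 1 + c / ((n:ℝ) + 1) := by positivity
  have hfac : 1 + c / (n:ℝ) = (1 + y) * (1 + c / ((n:ℝ) + 1)) := by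
    rw [hy_def]
    field_simp
    ring
  have hBy : 1 + c / ((n:ℝ) + 1) ≤ (1 + y) ^ (n + 1) := by
    have hb := bern2 y hy (n + 1)
    have hcc : (((n+1) * ((n+1) - 1) : ℕ) : ℝ) = ((n:ℝ)+1) * (n:ℝ) := by
      push_cast [Nat.succ_sub_one]; ring
    rw [hcc] at hb
    have key : c / ((n:ℝ) + 1) ≤ ((n:ℕ)+1:ℕ) * y + ((n:ℝ)+1) * (n:ℝ) / 2 * y ^ 2 := by
      push_cast
      rw [hy_def, div_le_iff₀ (by positivity)]
      have hexp : (((n:ℝ) + 1) * (c / ((n:ℝ) * ((n:ℝ) + 1 + c))) +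
          ((n:ℝ) + 1) * (n:ℝ) / 2 * (c / ((n:ℝ) * ((n:ℝ) + 1 + c))) ^ 2) * ((n:ℝ) + 1)
          = (c * ((n:ℝ)+1)^2 * ((n:ℝ) * ((n:ℝ)+1+c)) + ((n:ℝ)+1)^2 * (n:ℝ) / 2 * c^2)
            / ((n:ℝ) * ((n:ℝ)+1+c))^2 := by
        field_simp
      rw [hexp, le_div_iff₀ (by positivity)]
      have h2c : (0:ℝ) ≤ 2 - c := by linarith
      have hint1 : (0:ℝ) ≤ c * (2 - c) * (n:ℝ) := by positivity
      have hint2 : (0:ℝ) ≤ (2 - c) * (((n:ℝ)+3) * ((n:ℝ)-1)) := by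
        apply mul_nonneg h2c
        apply mul_nonneg (by linarith) (by linarith)
      nlinarith [hint1, hint2, mul_nonneg hc0 hnpos.le, sq_nonneg ((n:ℝ)+1),
        mul_nonneg (mul_nonneg hc0 hnpos.le) hnpos.le,
        mul_nonneg (mul_nonneg hint1 hnpos.le) hnpos.le,
        mul_nonneg hint1 hnpos.le, mul_nonneg hint2 hnpos.le,
        mul_nonneg (mul_nonneg hint2 hnpos.le) hnpos.le,
        mul_nonneg (mul_nonneg hc0 hc0) hnpos.le]
    calc 1 + c / ((n:ℝ) + 1)
        ≤ 1 + ((n:ℕ)+1:ℕ) * y + ((n:ℝ)+1) * (n:ℝ) / 2 * y ^ 2 := by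
          push_cast at key ⊢; linarith
      _ ≤ (1 + y) ^ (n + 1) := hb
  calc (1 + c / ((n:ℝ) + 1)) ^ (n + 1 + 1)
      = (1 + c / ((n:ℝ) + 1)) * (1 + c / ((n:ℝ) + 1)) ^ (n + 1) := by ring
    _ ≤ (1 + y) ^ (n + 1) * (1 + c / ((n:ℝ) + 1)) ^ (n + 1) := by
        apply mul_le_mul_of_nonneg_right hBy (by positivity)
    _ = ((1 + y) * (1 + c / ((n:ℝ) + 1))) ^ (n + 1) := by rw [mul_pow]
    _ = (1 + c / (n:ℝ)) ^ (n + 1) := by rw [← hfac]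

lemma mono_dec (c : ℝ) (hc0 : 0 ≤ c) (hc2 : c ≤ 2) (n₀ : ℕ) (h1 : 1 ≤ n₀) :
    ∀ n, n₀ ≤ n → (1 + c / n) ^ (n + 1) ≤ (1 + c / n₀) ^ (n₀ + 1) := by
  intro n hn
  induction n, hn using Nat.le_induction with
  | base => exact le_rfl
  | succ m hm ih =>
      have hstep := step_dec c hc0 hc2 m (le_trans h1 hm)
      push_cast at hstep ⊢
      calc (1 + c / ((m:ℝ) + 1)) ^ (m + 1 + 1) ≤ (1 + c / (m:ℝ)) ^ (m + 1) := hstep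
        _ ≤ (1 + c / (n₀:ℝ)) ^ (n₀ + 1) := ih

lemma Hgen (t : ℕ) (s : ℝ) (hs1 : 1 ≤ s) (n₀ : ℕ) (h1 : 1 ≤ n₀) (hn : n₀ + 2 ≤ t)
    (hbase : (1 + (2 - 2 / s) / (n₀ : ℝ)) ^ (n₀ + 1) ≤ s) :
    (((t : ℝ) - 2 / s) / ((t : ℝ) - 2)) ^ (t - 1) ≤ s := by
  set n : ℕ := t - 2 with hn_def
  have htn : t - 1 = n + 1 := by omega
  have ht2 : t = n + 2 := by omega
  have hT : (t : ℝ) = (n : ℝ) + 2 := by rw [ht2]; push_cast; ring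
  have hn1 : (1:ℝ) ≤ (n:ℝ) := by
    have : 1 ≤ n := by omega
    exact_mod_cast this
  have hs0 : (0:ℝ) < s := by linarith
  have hbase' : ((t : ℝ) - 2 / s) / ((t : ℝ) - 2) = 1 + (2 - 2 / s) / (n : ℝ) := by
    rw [hT]
    field_simp [show (n:ℝ) ≠ 0 by linarith]
    ring
  rw [htn, hbase']
  have hc0 : (0:ℝ) ≤ 2 - 2 / s := by
    have : 2 / s ≤ 2 / 1 := by
      apply div_le_div_of_nonneg_left (by norm_num) (by norm_num) hs1
    simp at this; linarith
  have hc2 : 2 - 2 / s ≤ 2 := by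
    have : (0:ℝ) ≤ 2 / s := by positivity
    linarith
  calc (1 + (2 - 2 / s) / (n : ℝ)) ^ (n + 1)
      ≤ (1 + (2 - 2 / s) / (n₀ : ℝ)) ^ (n₀ + 1) :=
        mono_dec (2 - 2/s) hc0 hc2 n₀ h1 n (by omega)
    _ ≤ s := hbase

lemma deduce (r t : ℕ) (hr : 6 ≤ r) (ht : 3 ≤ t)
    (H : (((t : ℝ) - 2 / ((r : ℝ) - 1)) / ((t : ℝ) - 2)) ^ (t - 1) ≤ (r : ℝ) - 1) :
    gfun t (3 / ((t : ℝ) + 1))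
      ≤ gfun t (((r : ℝ) + 1) / (((r : ℝ) - 1) * ((t : ℝ) + 1))) := by
  set s : ℝ := (r : ℝ) - 1 with hs_def
  have hs5 : (5:ℝ) ≤ s := by
    have : (6:ℝ) ≤ (r:ℝ) := by exact_mod_cast hr
    simp [hs_def]; linarith
  have hs0 : (0:ℝ) < s := by linarith
  have hT3 : (3:ℝ) ≤ (t:ℝ) := by exact_mod_cast ht
  have hT1 : (0:ℝ) < (t:ℝ) + 1 := by linarith
  have hT2 : (0:ℝ) < (t:ℝ) - 2 := by linarith
  set m : ℕ := t - 1 with hm_def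
  rw [gfun, gfun]
  have e1 : 1 - 3 / ((t:ℝ) + 1) = ((t:ℝ) - 2) / ((t:ℝ) + 1) := by
    field_simp
    ring
  have e2 : 1 - ((t:ℝ) + 1) * (3 / ((t:ℝ) + 1)) = -2 := by
    field_simp; ring
  have e3 : 1 - ((r : ℝ) + 1) / (((r : ℝ) - 1) * ((t : ℝ) + 1))
      = ((t:ℝ) - 2 / s) / ((t:ℝ) + 1) := by
    rw [← hs_def]
    have : (r:ℝ) + 1 = s + 2 := by rw [hs_def]; ring
    rw [this]
    field_simp
    ring
  have e4 : 1 - ((t:ℝ) + 1) * (((r : ℝ) + 1) / (((r : ℝ) - 1) * ((t : ℝ) + 1))) = -2 / s := by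
    rw [← hs_def]
    have : (r:ℝ) + 1 = s + 2 := by rw [hs_def]; ring
    rw [this]
    field_simp
    ring
  rw [e1, e2, e3, e4, ← hm_def]
  -- goal: ((t-2)/(t+1))^m * (-2) ≤ ((t - 2/s)/(t+1))^m * (-2/s)
  have hTm : (0:ℝ) < ((t:ℝ) + 1) ^ m := by positivity
  rw [div_pow, div_pow]
  rw [div_mul_eq_mul_div, div_mul_eq_mul_div, div_le_div_iff_of_pos_right hTm]
  -- goal: (t-2)^m * (-2) ≤ (t - 2/s)^m * (-2/s)
  have key : ((t:ℝ) - 2 / s) ^ m ≤ s * ((t:ℝ) - 2) ^ m := by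
    have h2 : (0:ℝ) < ((t:ℝ) - 2) ^ m := by positivity
    have := H
    rw [div_pow, div_le_iff₀ h2] at this
    exact this
  have hneg : (-2 / s : ℝ) ≤ 0 := by
    apply div_nonpos_of_nonpos_of_nonneg <;> linarith
  have := mul_le_mul_of_nonpos_right key hneg
  calc ((t:ℝ) - 2) ^ m * (-2) = s * ((t:ℝ) - 2) ^ m * (-2 / s) := by
        field_simp
    _ ≤ ((t:ℝ) - 2 / s) ^ m * (-2 / s) := this
/-- Lemma 3.10: for legal pairs `(r,t)`,
`g((r+1)/((r-1)(t+1))) ≥ g(3/(t+1))`; equivalently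
`((t - 2/(r-1))/(t-2))^{t-1} ≤ r - 1`. -/
theorem monotone_lemma (r t : ℕ) (hleg : Legal r t) :
    gfun t (3 / ((t : ℝ) + 1))
        ≤ gfun t (((r : ℝ) + 1) / (((r : ℝ) - 1) * ((t : ℝ) + 1))) ∧
      (((t : ℝ) - 2 / ((r : ℝ) - 1)) / ((t : ℝ) - 2)) ^ (t - 1) ≤ (r : ℝ) - 1 := by
  have hr : 6 ≤ r := by rcases hleg with ⟨h,_⟩|⟨h,_⟩|⟨h,_⟩|⟨h,_⟩ <;> omega
  have ht : 3 ≤ t := by rcases hleg with ⟨_,h⟩|⟨_,h⟩|⟨_,h⟩|⟨_,h⟩ <;> omega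
  have H : (((t : ℝ) - 2 / ((r : ℝ) - 1)) / ((t : ℝ) - 2)) ^ (t - 1) ≤ (r : ℝ) - 1 := by
    rcases hleg with ⟨hr9, ht3⟩|⟨hr8, ht4⟩|⟨hr7, ht5⟩|⟨hr6, ht37⟩
    · -- r ≥ 9, t ≥ 3, n₀ = 1
      have hs8 : (8:ℝ) ≤ (r:ℝ) - 1 := by
        have : (9:ℝ) ≤ (r:ℝ) := by exact_mod_cast hr9
        linarith
      apply Hgen t ((r:ℝ) - 1) (by linarith) 1 le_rfl (by omega)
      have hs0 : (0:ℝ) < (r:ℝ) - 1 := by linarith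
      have e : 1 + (2 - 2 / ((r:ℝ) - 1)) / ((1:ℕ):ℝ) = (3 * ((r:ℝ)-1) - 2) / ((r:ℝ)-1) := by
        push_cast
        field_simp
        ring
      rw [e, div_pow, div_le_iff₀ (by positivity)]
      have inner : (0:ℝ) ≤ ((r:ℝ)-1)^2 - ((r:ℝ)-1) + 4 := by nlinarith [sq_nonneg ((r:ℝ)-2)]
      have hprod := mul_nonneg (sub_nonneg.2 hs8) inner
      norm_num
      nlinarith [hprod]
    · -- r = 8, t ≥ 4, n₀ = 2
      subst hr8
      apply Hgen t ((8:ℝ) - 1) (by norm_num) 2 (by norm_num) (by omega)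
      norm_num
    · -- r = 7, t ≥ 5, n₀ = 3
      subst hr7
      apply Hgen t ((7:ℝ) - 1) (by norm_num) 3 (by norm_num) (by omega)
      norm_num
    · -- r = 6, t ≥ 37, n₀ = 35
      subst hr6
      apply Hgen t ((6:ℝ) - 1) (by norm_num) 35 (by norm_num) (by omega)
      norm_num
  exact ⟨deduce r t hr ht H, H⟩
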